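/- If z is a complex number and X is an n×k real matrix of full column rank with k < n such that M_X (z I_n − W) = 0, where M_X = I_n − X(X'X)^{-1}X' and W is an n×n real matrix, then z is a real eigenvalue of W. -/
import Mathlib


open Matrix

/-- The orthogonal projector onto the orthogonal complement of the column space of `X`. -/
noncomputable def MX {n k : ℕ} (X : Matrix (Fin n) (Fin k) ℝ) : Matrix (Fin n) (Fin n) ℝ :=
  1 - X * (Xᵀ * X)⁻¹ * Xᵀ

/-- If `M_X (z I − W) = 0` for a complex `z`, with `X` of full column rank `k < n`,
then `z` is a real eigenvalue of `W`. -/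
theorem stmt0 {n k : ℕ} (hkn : k < n) (W : Matrix (Fin n) (Fin n) ℝ)
    (X : Matrix (Fin n) (Fin k) ℝ) (hX : X.rank = k) (z : ℂ)
    (h : (MX X).map (Complex.ofReal) * (z • 1 - W.map (Complex.ofReal)) = 0) :
    z.im = 0 ∧ ∃ v : Fin n → ℝ, v ≠ 0 ∧ W.mulVec v = z.re • v := by
  -- MX X ≠ 0
  have hMX : MX X ≠ 0 := by
    intro h0
    have h1 : (1 : Matrix (Fin n) (Fin n) ℝ) = X * (Xᵀ * X)⁻¹ * Xᵀ := by
      have := sub_eq_zero.mp h0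
      simpa [MX] using this
    have hr : (X * (Xᵀ * X)⁻¹ * Xᵀ).rank ≤ k := by
      calc (X * (Xᵀ * X)⁻¹ * Xᵀ).rank ≤ (X * (Xᵀ * X)⁻¹).rank := rank_mul_le_left _ _
        _ ≤ X.rank := rank_mul_le_left _ _
        _ = k := hX
    rw [← h1, rank_one] at hr
    simp [Fintype.card_fin] at hr
    omega
  -- key complex equation rewritten
  have hkey : z • (MX X).map (Complex.ofReal) = (MX X * W).map (Complex.ofReal) := by
    have hm : (MX X * W).map (Complex.ofReal)
        = (MX X).map Complex.ofReal * W.map Complex.ofReal := by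
      ext a b
      simp [Matrix.mul_apply, Matrix.map_apply]
    have hmul : (MX X).map (Complex.ofReal) * (z • 1 - W.map (Complex.ofReal))
        = z • (MX X).map (Complex.ofReal) - (MX X * W).map (Complex.ofReal) := by
      rw [Matrix.mul_sub, hm]
      simp [Matrix.mul_smul]
    rw [hmul] at h
    exact sub_eq_zero.mp h
  -- entrywise consequences
  have hentry : ∀ i j, z * Complex.ofReal (MX X i j) = Complex.ofReal ((MX X * W) i j) := by
    intro i j
    have := congrFun (congrFun hkey i) j
    simpa [Matrix.smul_apply, Matrix.map_apply] using this
  obtain ⟨i, j, hij⟩ : ∃ i j, MX X i j ≠ 0 := by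
    by_contra hc
    push_neg at hc
    exact hMX (by ext i j; simpa using hc i j)
  have him : z.im = 0 := by
    have := congrArg Complex.im (hentry i j)
    simp [Complex.mul_im] at this
    rcases this with h' | h'
    · exact h'
    · exact absurd h' hij
  -- real equation
  have hre : MX X * W = z.re • MX X := by
    ext a b
    have := congrArg Complex.re (hentry a b)
    simp [Complex.mul_re, him] at this
    simpa [Matrix.smul_apply, mul_comm] using this.symm
  have hzero : MX X * (z.re • 1 - W) = 0 := by
    rw [Matrix.mul_sub, hre]
    simp [Matrix.mul_smul]
  -- determinant is zero
  have hdet : (z.re • (1 : Matrix (Fin n) (Fin n) ℝ) - W).det = 0 := by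
    by_contra hd
    have hinv := Matrix.mul_nonsing_inv (z.re • 1 - W) (isUnit_iff_ne_zero.mpr hd)
    have : MX X = 0 := by
      calc MX X = MX X * ((z.re • 1 - W) * (z.re • 1 - W)⁻¹) := by rw [hinv, Matrix.mul_one]
        _ = MX X * (z.re • 1 - W) * (z.re • 1 - W)⁻¹ := by rw [Matrix.mul_assoc]
        _ = 0 := by rw [hzero, Matrix.zero_mul]
    exact hMX this
  obtain ⟨v, hv0, hv⟩ := (Matrix.exists_mulVec_eq_zero_iff).mpr hdet
  refine ⟨him, v, hv0, ?_⟩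
  have := hv
  rw [Matrix.sub_mulVec, sub_eq_zero, Matrix.smul_mulVec, Matrix.one_mulVec] at this
  exact this.symm
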